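/- Let (S,·) be a semigroup, let l be a positive integer, let E be a subsemigroup of the direct product S^l that contains the diagonal {(a,a,…,a) : a ∈ S}, and let I be a (two-sided) ideal of E. If M is a piecewise syndetic subset of S, then M^l ∩ I is piecewise syndetic in the semigroup I. -/
import Mathlib


/-- `A` is thick relative to the subsemigroup `I` of `T`. -/
def MulThickIn {T : Type*} [Semigroup T] (I A : Set T) : Prop :=
  ∀ E : Finset T, ↑E ⊆ I → E.Nonempty → ∃ x ∈ I, ∀ e ∈ E, e * x ∈ A

/-- `A` is piecewise syndetic relative to the subsemigroup `I` of `T`. -/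
def MulPiecewiseSyndeticIn {T : Type*} [Semigroup T] (I A : Set T) : Prop :=
  ∃ G : Finset T, ↑G ⊆ I ∧ G.Nonempty ∧
    MulThickIn I {s ∈ I | ∃ g ∈ G, g * s ∈ A}

/-- `A` is piecewise syndetic in the semigroup `T`. -/
def MulPiecewiseSyndetic {T : Type*} [Semigroup T] (A : Set T) : Prop :=
  MulPiecewiseSyndeticIn Set.univ A

/- ### Auxiliary machinery: the Stone–Čech semigroup `Ultrafilter α` -/

attribute [local instance] Ultrafilter.mul Ultrafilter.semigroup

namespace BHAux

variable {α : Type*} [Semigroup α]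

theorem mem_mul_iff (U V : Ultrafilter α) (s : Set α) :
    s ∈ U * V ↔ {m | {n | m * n ∈ s} ∈ V} ∈ U := by
  have h := Ultrafilter.eventually_mul U V (· ∈ s)
  simpa only [Filter.eventually_iff, Ultrafilter.mem_coe, Set.setOf_mem_eq] using h

theorem pure_mul_mem_iff (a : α) (V : Ultrafilter α) (s : Set α) :
    s ∈ (pure a : Ultrafilter α) * V ↔ {n | a * n ∈ s} ∈ V := by
  rw [mem_mul_iff, Ultrafilter.mem_pure]
  exact Iff.rfl

theorem map_mul_hom {β : Type*} [Semigroup β] (φ : α → β)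
    (hφ : ∀ a b : α, φ (a * b) = φ a * φ b) (U V : Ultrafilter α) :
    Ultrafilter.map φ (U * V) = Ultrafilter.map φ U * Ultrafilter.map φ V := by
  refine Ultrafilter.coe_inj.mp (Filter.ext fun s => ?_)
  rw [Ultrafilter.mem_coe, Ultrafilter.mem_coe, Ultrafilter.mem_map,
    mem_mul_iff, mem_mul_iff, Ultrafilter.mem_map]
  have hset : {m | {n | m * n ∈ φ ⁻¹' s} ∈ V}
      = φ ⁻¹' {m' | {n' | m' * n' ∈ s} ∈ Ultrafilter.map φ V} := by
    ext m
    simp only [Set.mem_setOf_eq, Set.mem_preimage, Ultrafilter.mem_map]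
    have hin : {n | φ (m * n) ∈ s} = φ ⁻¹' {n' | φ m * n' ∈ s} := by
      ext n; simp only [Set.mem_setOf_eq, Set.mem_preimage, hφ m n]
    rw [hin]
  rw [hset]

/-- `L` is a closed left ideal of `Y` (inside `Ultrafilter α`). -/
def IsCLI (Y L : Set (Ultrafilter α)) : Prop :=
  L.Nonempty ∧ IsClosed L ∧ L ⊆ Y ∧ ∀ y ∈ Y, ∀ v ∈ L, y * v ∈ L

theorem exists_minimal_cli {Y L₀ : Set (Ultrafilter α)} (h₀ : IsCLI Y L₀) :
    ∃ L, L ⊆ L₀ ∧ IsCLI Y L ∧ ∀ L', IsCLI Y L' → L' ⊆ L → L' = L := by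
  have hchaincond : ∀ c ⊆ {L | IsCLI Y L ∧ L ⊆ L₀}, IsChain (· ⊆ ·) c → c.Nonempty →
      ∃ lb ∈ {L | IsCLI Y L ∧ L ⊆ L₀}, ∀ s ∈ c, lb ⊆ s := by
    intro c hcS hchain hcne
    refine ⟨⋂₀ c, ⟨⟨?_, ?_, ?_, ?_⟩, ?_⟩, fun s hs => Set.sInter_subset_of_mem hs⟩
    · haveI : Nonempty c := hcne.to_subtype
      rw [Set.sInter_eq_iInter]
      apply IsCompact.nonempty_iInter_of_directed_nonempty_isCompact_isClosed
      · intro i j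
        rcases hchain.total i.2 j.2 with h | h
        · exact ⟨i, Set.Subset.refl _, h⟩
        · exact ⟨j, h, Set.Subset.refl _⟩
      · exact fun i => (hcS i.2).1.1
      · exact fun i => (hcS i.2).1.2.1.isCompact
      · exact fun i => (hcS i.2).1.2.1
    · exact isClosed_sInter fun s hs => (hcS hs).1.2.1
    · obtain ⟨s₀, hs₀⟩ := hcne
      exact (Set.sInter_subset_of_mem hs₀).trans (hcS hs₀).1.2.2.1
    · intro y hy v hv
      rw [Set.mem_sInter] at hv ⊢
      exact fun s hs => (hcS hs).1.2.2.2 y hy v (hv s hs)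
    · obtain ⟨s₀, hs₀⟩ := hcne
      exact (Set.sInter_subset_of_mem hs₀).trans (hcS hs₀).2
  obtain ⟨m, hmsub, hmin⟩ :=
    zorn_superset_nonempty {L | IsCLI Y L ∧ L ⊆ L₀} hchaincond L₀ ⟨h₀, subset_rfl⟩
  exact ⟨m, hmsub, hmin.prop.1,
    fun L' hL' hsub => hmin.eq_of_subset ⟨hL', hsub.trans hmsub⟩ hsub⟩

theorem smul_image_cli {Y : Set (Ultrafilter α)} (hYne : Y.Nonempty) (hYc : IsClosed Y)
    (hYm : ∀ y ∈ Y, ∀ z ∈ Y, y * z ∈ Y) {v : Ultrafilter α} (hv : v ∈ Y) :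
    IsCLI Y ((· * v) '' Y) := by
  refine ⟨hYne.image _, ?_, ?_, ?_⟩
  · exact (hYc.isCompact.image (Ultrafilter.continuous_mul_left v)).isClosed
  · rintro _ ⟨y, hy, rfl⟩; exact hYm y hy v hv
  · rintro y hy _ ⟨z, hz, rfl⟩
    refine ⟨y * z, hYm y hy z hz, ?_⟩
    show y * z * v = y * (z * v)
    exact mul_assoc y z v

theorem minimal_eq_smul {Y L : Set (Ultrafilter α)} (hYne : Y.Nonempty) (hYc : IsClosed Y)
    (hYm : ∀ y ∈ Y, ∀ z ∈ Y, y * z ∈ Y) (hL : IsCLI Y L)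
    (hmin : ∀ L', IsCLI Y L' → L' ⊆ L → L' = L) {v : Ultrafilter α} (hv : v ∈ L) :
    (· * v) '' Y = L := by
  apply hmin
  · exact smul_image_cli hYne hYc hYm (hL.2.2.1 hv)
  · rintro _ ⟨y, hy, rfl⟩; exact hL.2.2.2 y hy v hv

theorem exists_idem {Y L : Set (Ultrafilter α)} (hL : IsCLI Y L) : ∃ e ∈ L, e * e = e := by
  obtain ⟨ne, cl, sub, ideal⟩ := hL
  exact exists_idempotent_in_compact_subsemigroup Ultrafilter.continuous_mul_left L ne
    cl.isCompact (fun x hx y hy => ideal x (sub hx) y hy)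

end BHAux

/-- Bergelson–Hindman: if `E` is a subsemigroup of `S^l` containing the diagonal,
`I` is a two-sided ideal of `E`, and `M ⊆ S` is piecewise syndetic, then
`M^l ∩ I` is piecewise syndetic in the semigroup `I`. -/
theorem stmt1 {S : Type*} [Semigroup S] (l : ℕ) (hl : 0 < l)
    (E : Set (Fin l → S)) (hEmul : ∀ a ∈ E, ∀ b ∈ E, a * b ∈ E)
    (hdiag : ∀ a : S, (fun _ => a) ∈ E)
    (I : Set (Fin l → S)) (hIsub : I ⊆ E) (hIne : I.Nonempty)
    (hIdeal : ∀ e ∈ E, ∀ i ∈ I, e * i ∈ I ∧ i * e ∈ I)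
    (M : Set S) (hM : MulPiecewiseSyndetic M) :
    MulPiecewiseSyndeticIn I ({f : Fin l → S | ∀ j, f j ∈ M} ∩ I) := by
  classical
  obtain ⟨w, hw⟩ := hIne
  obtain ⟨G, -, hGne, hGthick⟩ := hM
  set B : Set S := {s ∈ Set.univ | ∃ g ∈ G, g * s ∈ M} with hB
  -- an ultrafilter `y0` containing all sets `{x | e * x ∈ B}`
  have hcond : ∀ T : Finset (Set S), ↑T ⊆ Set.range (fun e : S => {x | e * x ∈ B}) →
      (⋂₀ (↑T : Set (Set S))).Nonempty := by
    intro T hT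
    rcases T.eq_empty_or_nonempty with rfl | hTne
    · simp only [Finset.coe_empty, Set.sInter_empty]
      exact ⟨w ⟨0, hl⟩, trivial⟩
    · have hex : ∀ t ∈ T, ∃ e : S, {x | e * x ∈ B} = t := fun t ht => hT ht
      set E₀ : Finset S := T.attach.image (fun t => (hex t.1 t.2).choose) with hE₀
      have hE₀ne : E₀.Nonempty := by
        obtain ⟨t, ht⟩ := hTne
        exact ⟨_, Finset.mem_image.2 ⟨⟨t, ht⟩, Finset.mem_attach _ _, rfl⟩⟩
      obtain ⟨x, -, hx⟩ := hGthick E₀ (fun _ _ => Set.mem_univ _) hE₀ne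
      refine ⟨x, fun t ht => ?_⟩
      have hmem : (hex t ht).choose ∈ E₀ :=
        Finset.mem_image.2 ⟨⟨t, ht⟩, Finset.mem_attach _ _, rfl⟩
      have hxt := hx _ hmem
      rw [← (hex t ht).choose_spec]
      exact hxt
  obtain ⟨y0, hy0⟩ := Ultrafilter.exists_ultrafilter_of_finite_inter_nonempty _ hcond
  have hy0' : ∀ e : S, {x | e * x ∈ B} ∈ y0 := fun e => hy0 (Set.mem_range_self e)
  -- a minimal closed left ideal `L₀` of `βS` and a minimal `p ∈ L₀` with `M ∈ p`
  have hUnivne : (Set.univ : Set (Ultrafilter S)).Nonempty := ⟨pure (w ⟨0, hl⟩), trivial⟩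
  have hUnivm : ∀ y ∈ (Set.univ : Set (Ultrafilter S)), ∀ z ∈ (Set.univ : Set (Ultrafilter S)),
      y * z ∈ (Set.univ : Set (Ultrafilter S)) := fun _ _ _ _ => trivial
  obtain ⟨L₀, hL₀sub, hL₀, hL₀min⟩ := BHAux.exists_minimal_cli
    (BHAux.smul_image_cli hUnivne isClosed_univ hUnivm (Set.mem_univ y0))
  obtain ⟨p₀, hp₀⟩ := hL₀.1
  have hBp₀ : B ∈ p₀ := by
    obtain ⟨u, -, rfl⟩ := hL₀sub hp₀
    rw [BHAux.mem_mul_iff]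
    have huniv : {m : S | {n | m * n ∈ B} ∈ y0} = Set.univ :=
      Set.eq_univ_of_forall fun m => hy0' m
    rw [huniv]
    exact Filter.univ_mem
  have hBunion : B = ⋃ g ∈ (↑G : Set S), {s : S | g * s ∈ M} := by
    ext s; simp [hB]
  have hgex : ∃ g ∈ (↑G : Set S), {s : S | g * s ∈ M} ∈ p₀ := by
    rw [hBunion] at hBp₀
    exact (Ultrafilter.finite_biUnion_mem_iff G.finite_toSet).1 hBp₀
  obtain ⟨g, hgG, hgp⟩ := hgex
  set p : Ultrafilter S := pure g * p₀ with hp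
  have hpL₀ : p ∈ L₀ := hL₀.2.2.2 _ trivial p₀ hp₀
  have hMp : M ∈ p := by
    rw [hp, BHAux.pure_mul_mem_iff]
    exact hgp
  -- pass to `β(S^l)`
  set ι : S → (Fin l → S) := fun a _ => a with hι
  have hιhom : ∀ a b : S, ι (a * b) = ι a * ι b := fun a b => rfl
  set Y : Set (Ultrafilter (Fin l → S)) := {r | E ∈ r} with hY
  have hYne : Y.Nonempty := by
    refine ⟨pure w, ?_⟩
    show E ∈ (pure w : Ultrafilter (Fin l → S))
    rw [Ultrafilter.mem_pure]
    exact hIsub hw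
  have hYc : IsClosed Y := ultrafilter_isClosed_basic E
  have hYm : ∀ y ∈ Y, ∀ z ∈ Y, y * z ∈ Y := by
    intro y hy z hz
    show E ∈ y * z
    rw [BHAux.mem_mul_iff]
    refine Filter.mem_of_superset hy (fun m hm => ?_)
    exact Filter.mem_of_superset hz (fun n hn => hEmul m hm n hn)
  set q : Ultrafilter (Fin l → S) := Ultrafilter.map ι p with hq
  have hqY : q ∈ Y := by
    show E ∈ q
    rw [hq, Ultrafilter.mem_map]
    have : ι ⁻¹' E = Set.univ := Set.eq_univ_of_forall fun a => hdiag a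
    rw [this]
    exact Filter.univ_mem
  obtain ⟨L, hLsub, hL, hLmin⟩ := BHAux.exists_minimal_cli
    (BHAux.smul_image_cli hYne hYc hYm hqY)
  obtain ⟨e, heL, heid⟩ := BHAux.exists_idem hL
  set r : Ultrafilter (Fin l → S) := q * e with hr
  have hrL : r ∈ L := hL.2.2.2 q hqY e heL
  -- every coordinate of `r` is `p`
  have hcoord : ∀ j : Fin l, {f : Fin l → S | f j ∈ M} ∈ r := by
    intro j
    set π : (Fin l → S) → S := fun f => f j with hπ
    have hπhom : ∀ a b : Fin l → S, π (a * b) = π a * π b := fun a b => rfl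
    have hπι : Ultrafilter.map π q = p := by
      rw [hq, Ultrafilter.map_map]
      have : π ∘ ι = id := rfl
      rw [this, Ultrafilter.map_id]
    obtain ⟨z, hzY, hze⟩ := hLsub heL
    set ε : Ultrafilter S := Ultrafilter.map π e with hε
    have hεL₀ : ε ∈ L₀ := by
      rw [hε, ← hze, BHAux.map_mul_hom π hπhom, hπι]
      exact hL₀.2.2.2 _ trivial p hpL₀
    have hεid : ε * ε = ε := by
      rw [hε, ← BHAux.map_mul_hom π hπhom, heid]
    have hpε : p * ε = p := by
      have him := BHAux.minimal_eq_smul hUnivne isClosed_univ hUnivm hL₀ hL₀min hεL₀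
      have hpmem : p ∈ (· * ε) '' Set.univ := him.symm ▸ hpL₀
      obtain ⟨u, -, hu0⟩ := hpmem
      have hu : u * ε = p := hu0
      calc p * ε = (u * ε) * ε := by rw [hu]
        _ = u * (ε * ε) := mul_assoc u ε ε
        _ = u * ε := by rw [hεid]
        _ = p := hu
    have hmapr : Ultrafilter.map π r = p := by
      rw [hr, BHAux.map_mul_hom π hπhom, hπι, ← hε, hpε]
    have : π ⁻¹' M ∈ r := by
      rw [← Ultrafilter.mem_map, hmapr]
      exact hMp
    exact this
  set A : Set (Fin l → S) := {f : Fin l → S | ∀ j, f j ∈ M} ∩ I with hA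
  have hEofL : ∀ {x : Ultrafilter (Fin l → S)}, x ∈ L → E ∈ x := fun hx => hL.2.2.1 hx
  -- every element of `L` contains `I`
  have hIr : ∀ x ∈ L, I ∈ x := by
    intro x hx
    have hwY : (pure w : Ultrafilter (Fin l → S)) ∈ Y := by
      show E ∈ (pure w : Ultrafilter (Fin l → S))
      rw [Ultrafilter.mem_pure]; exact hIsub hw
    have hv'L : (pure w : Ultrafilter (Fin l → S)) * r ∈ L := hL.2.2.2 _ hwY r hrL
    have hIv' : I ∈ (pure w : Ultrafilter (Fin l → S)) * r := by
      rw [BHAux.pure_mul_mem_iff]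
      exact Filter.mem_of_superset (hEofL hrL) (fun b hb => (hIdeal b hb w hw).2)
    have him := BHAux.minimal_eq_smul hYne hYc hYm hL hLmin hv'L
    have hxmem : x ∈ (· * ((pure w : Ultrafilter (Fin l → S)) * r)) '' Y := him.symm ▸ hx
    obtain ⟨u, huY, hu0⟩ := hxmem
    have hu : u * ((pure w : Ultrafilter (Fin l → S)) * r) = x := hu0
    rw [← hu, BHAux.mem_mul_iff]
    refine Filter.mem_of_superset huY (fun m hm => ?_)
    show {n | m * n ∈ I} ∈ (pure w : Ultrafilter (Fin l → S)) * r
    exact Filter.mem_of_superset hIv' (fun n hn => (hIdeal m hm n hn).1)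
  have hIr' : I ∈ r := hIr r hrL
  have hAr : A ∈ r := by
    have hMl : {f : Fin l → S | ∀ j, f j ∈ M} ∈ r := by
      have hiinter : {f : Fin l → S | ∀ j, f j ∈ M} = ⋂ j, {f : Fin l → S | f j ∈ M} := by
        ext f; simp
      rw [hiinter]
      exact Filter.iInter_mem.2 hcoord
    exact Filter.inter_mem hMl hIr'
  -- extract a finite cover of `L` by translates
  have hLcover : L ⊆ ⋃ a ∈ E, {v : Ultrafilter (Fin l → S) | {b | a * b ∈ A} ∈ v} := by
    intro v hv
    have him := BHAux.minimal_eq_smul hYne hYc hYm hL hLmin hv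
    have hrmem : r ∈ (· * v) '' Y := him.symm ▸ hrL
    obtain ⟨u, huY, hu0⟩ := hrmem
    have hu : u * v = r := hu0
    have hΩ : {m | {n | m * n ∈ A} ∈ v} ∈ u := by
      rw [← BHAux.mem_mul_iff, hu]; exact hAr
    have hne : ({m | {n | m * n ∈ A} ∈ v} ∩ E).Nonempty :=
      Ultrafilter.nonempty_of_mem (Filter.inter_mem hΩ huY)
    obtain ⟨a, haΩ, haE⟩ := hne
    exact Set.mem_biUnion haE haΩ
  obtain ⟨Γ, hΓE, hΓfin, hΓcover⟩ := (hL.2.1.isCompact).elim_finite_subcover_image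
    (fun a _ => ultrafilter_isOpen_basic _) hLcover
  have key : ∀ s ∈ I, ∃ a ∈ Γ, {n | a * (s * n) ∈ A} ∈ r := by
    intro s hs
    have hsY : (pure s : Ultrafilter (Fin l → S)) ∈ Y := by
      show E ∈ (pure s : Ultrafilter (Fin l → S))
      rw [Ultrafilter.mem_pure]; exact hIsub hs
    have hsrL : (pure s : Ultrafilter (Fin l → S)) * r ∈ L := hL.2.2.2 _ hsY r hrL
    have hsr := hΓcover hsrL
    rw [Set.mem_iUnion₂] at hsr
    obtain ⟨a, haΓ, hamem⟩ := hsr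
    rw [Set.mem_setOf_eq, BHAux.pure_mul_mem_iff] at hamem
    exact ⟨a, haΓ, hamem⟩
  have hΓne : Γ.Nonempty := by
    have := hΓcover hrL
    rw [Set.mem_iUnion₂] at this
    obtain ⟨a, haΓ, -⟩ := this
    exact ⟨a, haΓ⟩
  -- conclude
  refine ⟨(hΓfin.image (· * w)).toFinset, ?_, ?_, ?_⟩
  · rw [Set.Finite.coe_toFinset]
    rintro _ ⟨a, haΓ, rfl⟩
    exact (hIdeal a (hΓE haΓ) w hw).1
  · rw [Set.Finite.toFinset_nonempty]
    exact hΓne.image _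
  · intro F hFI hFne
    have hkey : ∀ f ∈ F, ∃ a, a ∈ Γ ∧ {n | a * ((w * f) * n) ∈ A} ∈ r := by
      intro f hf
      obtain ⟨a, ha, h⟩ := key (w * f) ((hIdeal f (hIsub (hFI hf)) w hw).2)
      exact ⟨a, ha, h⟩
    choose! af haf₁ haf₂ using hkey
    have hX : (I ∩ ⋂ f ∈ F, {n | af f * ((w * f) * n) ∈ A}) ∈ r :=
      Filter.inter_mem hIr' ((Filter.biInter_finset_mem F).2 haf₂)
    obtain ⟨x, hxI, hxint⟩ := Ultrafilter.nonempty_of_mem hX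
    refine ⟨x, hxI, ?_⟩
    intro f hf
    have hfI : f ∈ I := hFI hf
    have hfx : af f * ((w * f) * x) ∈ A := by
      rw [Set.mem_iInter₂] at hxint
      exact hxint f hf
    refine ⟨(hIdeal f (hIsub hfI) x hxI).1, ⟨af f * w, ?_, ?_⟩⟩
    · rw [Set.Finite.mem_toFinset]
      exact ⟨af f, haf₁ f hf, rfl⟩
    · have hassoc : (af f * w) * (f * x) = af f * ((w * f) * x) := by
        rw [mul_assoc, ← mul_assoc w f x]
      rw [hassoc]
      exact hfx
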